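/- Let M ≥ 1 and let e_i ∈ ℝ^{T_M} be the i-th canonical basis vector (value 1 at site i, 0 elsewhere, indices mod M). Then ‖e_i‖_{-1,M}² ≤ C/M and ‖e_{i+1} - e_i‖_{-1,M}² ≤ C/M³ for a universal constant C independent of M and i. -/

import Mathlib

/-- The periodic discrete Laplacian `(Δ_M u)_j = M² (u_{j+1} + u_{j-1} - 2 u_j)`. -/
noncomputable def lapM (M : ℕ) [NeZero M] (u : ZMod M → ℝ) : ZMod M → ℝ :=
  fun j => (M : ℝ) ^ 2 * (u (j + 1) + u (j - 1) - 2 * u j)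

/-- The uniformly weighted inner product `⟨u, v⟩_{2,M} = (1/M) ∑_j u_j v_j`. -/
noncomputable def innerM (M : ℕ) [NeZero M] (u v : ZMod M → ℝ) : ℝ :=
  (1 / (M : ℝ)) * ∑ j : ZMod M, u j * v j

/-- The mean `[u]_M = (1/M) ∑_j u_j`. -/
noncomputable def meanM (M : ℕ) [NeZero M] (u : ZMod M → ℝ) : ℝ :=
  (1 / (M : ℝ)) * ∑ j : ZMod M, u j

/-- The `i`-th canonical basis vector of `ℝ^{T_M}` (indices mod `M`). -/
noncomputable def eM (M : ℕ) [NeZero M] (i : ZMod M) : ZMod M → ℝ :=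
  fun j => if j = i then 1 else 0

variable {M : ℕ} [NeZero M]

lemma sum_shift (F : ZMod M → ℝ) : ∑ j : ZMod M, F (j + 1) = ∑ j : ZMod M, F j :=
  Fintype.sum_equiv (Equiv.addRight (1 : ZMod M)) _ _ (fun _ => rfl)

lemma const_of_step (v : ZMod M → ℝ) (h : ∀ j, v (j + 1) = v j) : ∀ j, v j = v 0 := by
  have hn : ∀ n : ℕ, v (n : ZMod M) = v 0 := by
    intro n
    induction n with
    | zero => simp
    | succ k ih => rw [Nat.cast_succ, h, ih]
  intro j
  rw [← ZMod.natCast_zmod_val j, hn]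

lemma val_sub_one_ne (a : ZMod M) (ha : a ≠ 0) : ((a - 1).val : ℝ) = (a.val : ℝ) - 1 := by
  have h1 : 1 ≤ a.val := Nat.pos_of_ne_zero (fun h => ha ((ZMod.val_eq_zero a).mp h))
  have key : a - 1 = ((a.val - 1 : ℕ) : ZMod M) := by
    rw [Nat.cast_sub h1, ZMod.natCast_zmod_val, Nat.cast_one]
  rw [key, ZMod.val_cast_of_lt (lt_of_le_of_lt (Nat.sub_le _ _) (ZMod.val_lt a))]
  push_cast [Nat.cast_sub h1]
  ring

lemma inner_eq (u w G : ZMod M → ℝ)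
    (h : ∀ j, -(lapM M w j) = u j)
    (hG : ∀ j, G j - G (j - 1) = -(u j) / (M : ℝ) ^ 2)
    (hGs : ∑ j : ZMod M, G j = 0) :
    innerM M u w = (M : ℝ) * ∑ j : ZMod M, (G j) ^ 2 := by
  have hM : (M : ℝ) ≠ 0 := Nat.cast_ne_zero.mpr (NeZero.ne M)
  have hg : ∀ j : ZMod M, (w (j + 1) - w j) - (w j - w (j - 1)) = -(u j) / (M : ℝ) ^ 2 := by
    intro j
    rw [← h j]
    unfold lapM
    field_simp
    ring
  set d : ZMod M → ℝ := fun j => (w (j + 1) - w j) - G j with hd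
  have hstep : ∀ j, d (j + 1) = d j := by
    intro j
    have h1 := hg (j + 1)
    have h2 := hG (j + 1)
    simp only [add_sub_cancel_right] at h1 h2
    simp only [hd]
    linarith
  have hconst := const_of_step d hstep
  have hsum : ∑ j : ZMod M, d j = 0 := by
    simp only [hd]
    rw [Finset.sum_sub_distrib, Finset.sum_sub_distrib, hGs, sum_shift w]
    ring
  have hd0 : d 0 = 0 := by
    have h3 : ∑ j : ZMod M, d j = (M : ℝ) * d 0 := by
      rw [Finset.sum_congr rfl (fun j _ => hconst j)]
      simp [Finset.card_univ, ZMod.card]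
    rw [hsum] at h3
    exact (mul_eq_zero.mp h3.symm).resolve_left hM
  have hgrad : ∀ j, w (j + 1) - w j = G j := by
    intro j
    have h4 := hconst j
    rw [hd0] at h4
    simp only [hd] at h4
    linarith
  have e1 : ∑ j : ZMod M, u j * w j =
      ∑ j : ZMod M, ((M : ℝ) ^ 2 * (2 * w j ^ 2 - w (j + 1) * w j - w (j - 1) * w j)) := by
    refine Finset.sum_congr rfl (fun j _ => ?_)
    rw [← h j]; unfold lapM; ring
  have s1 : ∑ j : ZMod M, w (j - 1) * w j = ∑ j : ZMod M, w j * w (j + 1) := by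
    have h5 : ∑ j : ZMod M, w (j + 1 - 1) * w (j + 1) = ∑ j : ZMod M, w (j - 1) * w j :=
      sum_shift (fun j => w (j - 1) * w j)
    simp only [add_sub_cancel_right] at h5
    exact h5.symm
  have s2 : ∑ j : ZMod M, w (j + 1) ^ 2 = ∑ j : ZMod M, w j ^ 2 :=
    sum_shift (fun j => w j ^ 2)
  have t1 : ∑ j : ZMod M, (w (j + 1) - w j) ^ 2 =
      2 * (∑ j : ZMod M, w j ^ 2) - 2 * (∑ j : ZMod M, w j * w (j + 1)) := by
    have e2 : ∑ j : ZMod M, (w (j + 1) - w j) ^ 2 =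
        ∑ j : ZMod M, (w (j + 1) ^ 2 - 2 * (w j * w (j + 1)) + w j ^ 2) :=
      Finset.sum_congr rfl (fun j _ => by ring)
    rw [e2, Finset.sum_add_distrib, Finset.sum_sub_distrib, s2, ← Finset.mul_sum]
    ring
  have t2 : ∑ j : ZMod M, u j * w j = (M : ℝ) ^ 2 *
      (2 * (∑ j : ZMod M, w j ^ 2) - (∑ j : ZMod M, w (j + 1) * w j)
        - (∑ j : ZMod M, w (j - 1) * w j)) := by
    rw [e1, ← Finset.mul_sum]
    congr 1
    rw [Finset.sum_sub_distrib, Finset.sum_sub_distrib, ← Finset.mul_sum]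
  have t3 : ∑ j : ZMod M, w (j + 1) * w j = ∑ j : ZMod M, w j * w (j + 1) :=
    Finset.sum_congr rfl (fun j _ => mul_comm _ _)
  have hsq : ∑ j : ZMod M, (w (j + 1) - w j) ^ 2 = ∑ j : ZMod M, (G j) ^ 2 :=
    Finset.sum_congr rfl (fun j _ => by rw [hgrad j])
  have key : ∑ j : ZMod M, u j * w j = (M : ℝ) ^ 2 * ∑ j : ZMod M, (G j) ^ 2 := by
    rw [t2, ← hsq, t1, t3, s1]
    ring
  unfold innerM
  rw [key]
  field_simp

lemma val_neg_one_real : (((-1 : ZMod M)).val : ℝ) = (M : ℝ) - 1 := by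
  obtain ⟨n, rfl⟩ := Nat.exists_eq_succ_of_ne_zero (NeZero.ne M)
  rw [ZMod.val_neg_one]
  push_cast
  ring

lemma sum_val_real : ∑ a : ZMod M, (a.val : ℝ) = (M : ℝ) * ((M : ℝ) - 1) / 2 := by
  have h1 : ∑ a : ZMod M, (a.val : ℝ) = ∑ k ∈ Finset.range M, (k : ℝ) := by
    rw [Finset.sum_nbij' (i := fun (a : ZMod M) => a.val) (j := fun k => (k : ZMod M))]
    · intro a _; simp [ZMod.val_lt a]
    · intro k hk; simp
    · intro a _; simp [ZMod.natCast_zmod_val]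
    · intro k hk; simp at hk; simp [ZMod.val_cast_of_lt hk]
    · intro a _; rfl
  have h2 : (∑ k ∈ Finset.range M, (k : ℝ)) * 2 = (M : ℝ) * ((M : ℝ) - 1) := by
    have := Finset.sum_range_id_mul_two M
    have hM : 1 ≤ M := Nat.one_le_iff_ne_zero.mpr (NeZero.ne M)
    have : (((∑ i ∈ Finset.range M, i) * 2 : ℕ) : ℝ) = ((M * (M - 1) : ℕ) : ℝ) := by rw [this]
    push_cast [Nat.cast_sub hM] at this
    linarith
  rw [h1]
  linarith

lemma case1 (i : ZMod M) (w : ZMod M → ℝ)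
    (h : ∀ j, -(lapM M w j) = eM M i j - meanM M (eM M i)) :
    (meanM M (eM M i)) ^ 2 +
      innerM M (fun j => eM M i j - meanM M (eM M i)) w ≤ 2 / (M : ℝ) := by
  have hM : (M : ℝ) ≠ 0 := Nat.cast_ne_zero.mpr (NeZero.ne M)
  have hN1 : 1 ≤ (M : ℝ) := by
    exact_mod_cast Nat.one_le_iff_ne_zero.mpr (NeZero.ne M)
  have hN0 : 0 < (M : ℝ) := by linarith
  have hmean : meanM M (eM M i) = 1 / (M : ℝ) := by
    unfold meanM eM
    simp
  set G : ZMod M → ℝ := fun j => (((j - i).val : ℝ) - ((M : ℝ) - 1) / 2) / (M : ℝ) ^ 3 with hGdef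
  have hGs : ∑ j : ZMod M, G j = 0 := by
    have hv : ∑ j : ZMod M, (((j - i).val : ℝ)) = (M : ℝ) * ((M : ℝ) - 1) / 2 := by
      have he := Fintype.sum_equiv (Equiv.subRight i)
        (fun j : ZMod M => ((j - i).val : ℝ)) (fun a => ((a.val : ℝ))) (fun j => rfl)
      rw [he]
      exact sum_val_real
    simp only [hGdef]
    rw [← Finset.sum_div, Finset.sum_sub_distrib, hv, Finset.sum_const, Finset.card_univ,
      ZMod.card, nsmul_eq_mul]
    field_simp
    ring
  have hG : ∀ j, G j - G (j - 1) =
      -(eM M i j - meanM M (eM M i)) / (M : ℝ) ^ 2 := by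
    intro j
    have hrw : j - 1 - i = j - i - 1 := by ring
    rw [hmean]
    simp only [hGdef, eM, hrw]
    by_cases hj : j = i
    · have h0 : j - i = 0 := by rw [hj, sub_self]
      rw [h0, if_pos hj]
      rw [show (0 : ZMod M) - 1 = -1 by ring, val_neg_one_real]
      simp only [ZMod.val_zero]
      field_simp
      ring
    · have h0 : j - i ≠ 0 := fun hc => hj (by rwa [sub_eq_zero] at hc)
      rw [val_sub_one_ne _ h0, if_neg hj]
      field_simp
      ring
  have hinner := inner_eq _ w G h hG hGs
  have hsumsq : ∑ j : ZMod M, (G j) ^ 2 ≤ (M : ℝ) * (1 / (4 * (M : ℝ) ^ 4)) := by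
    have hb : ∀ j : ZMod M, (G j) ^ 2 ≤ 1 / (4 * (M : ℝ) ^ 4) := by
      intro j
      have hx0 : (0 : ℝ) ≤ ((j - i).val : ℝ) := Nat.cast_nonneg _
      have hx1 : ((j - i).val : ℝ) ≤ (M : ℝ) - 1 := by
        have := ZMod.val_lt (j - i)
        have : ((j - i).val : ℝ) < (M : ℝ) := by exact_mod_cast this
        have hnat : (j - i).val + 1 ≤ M := ZMod.val_lt (j - i)
        have : (((j - i).val : ℝ)) + 1 ≤ (M : ℝ) := by exact_mod_cast hnat
        linarith
      simp only [hGdef]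
      rw [div_pow, div_le_div_iff₀ (by positivity) (by positivity)]
      nlinarith [mul_nonneg (mul_nonneg hx0 (by linarith : (0:ℝ) ≤ (M : ℝ) - 1 - ((j - i).val : ℝ)))
          (pow_nonneg hN0.le 4),
        mul_nonneg (by linarith : (0:ℝ) ≤ 2 * (M : ℝ) - 1) (pow_nonneg hN0.le 4)]
    calc ∑ j : ZMod M, (G j) ^ 2 ≤ ∑ _j : ZMod M, 1 / (4 * (M : ℝ) ^ 4) :=
          Finset.sum_le_sum (fun j _ => hb j)
      _ = (M : ℝ) * (1 / (4 * (M : ℝ) ^ 4)) := by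
          rw [Finset.sum_const, Finset.card_univ, ZMod.card, nsmul_eq_mul]
  have hinner2 : innerM M (fun j => eM M i j - meanM M (eM M i)) w ≤ 1 / (4 * (M : ℝ) ^ 2) := by
    rw [hinner]
    have : (M : ℝ) * ((M : ℝ) * (1 / (4 * (M : ℝ) ^ 4))) = 1 / (4 * (M : ℝ) ^ 2) := by
      field_simp
    nlinarith [hsumsq]
  have hfin : 1 / (M : ℝ) ^ 2 + 1 / (4 * (M : ℝ) ^ 2) ≤ 2 / (M : ℝ) := by
    rw [div_add_div _ _ (by positivity) (by positivity),
      div_le_div_iff₀ (by positivity) (by positivity)]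
    nlinarith [mul_le_mul_of_nonneg_left hN1 (le_of_lt (pow_pos hN0 3)),
      pow_nonneg hN0.le 4]
  have hm2 : (meanM M (eM M i)) ^ 2 = 1 / (M : ℝ) ^ 2 := by
    rw [hmean, div_pow]; norm_num
  linarith [hinner2]

lemma case2 (i : ZMod M) (w' : ZMod M → ℝ)
    (h : ∀ j, -(lapM M w' j) =
      (eM M (i+1) j - eM M i j) - meanM M (fun j => eM M (i+1) j - eM M i j)) :
    (meanM M (fun j => eM M (i+1) j - eM M i j)) ^ 2 +
      innerM M (fun j => (eM M (i+1) j - eM M i j)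
        - meanM M (fun j => eM M (i+1) j - eM M i j)) w'
      ≤ 2 / (M : ℝ) ^ 3 := by
  have hM : (M : ℝ) ≠ 0 := Nat.cast_ne_zero.mpr (NeZero.ne M)
  have hN1 : 1 ≤ (M : ℝ) := by
    exact_mod_cast Nat.one_le_iff_ne_zero.mpr (NeZero.ne M)
  have hN0 : 0 < (M : ℝ) := by linarith
  have hmean : meanM M (fun j => eM M (i+1) j - eM M i j) = 0 := by
    unfold meanM eM
    rw [Finset.sum_sub_distrib]
    simp
  set G : ZMod M → ℝ := fun j => if j = i then ((M : ℝ) - 1) / (M : ℝ) ^ 3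
      else -1 / (M : ℝ) ^ 3 with hGdef
  have hGs : ∑ j : ZMod M, G j = 0 := by
    have hp : ∀ j : ZMod M, G j = -1 / (M : ℝ) ^ 3 +
        (if j = i then (M : ℝ) / (M : ℝ) ^ 3 else 0) := by
      intro j
      simp only [hGdef]
      split_ifs with hj
      · field_simp; ring
      · ring
    rw [Finset.sum_congr rfl (fun j _ => hp j), Finset.sum_add_distrib, Finset.sum_const,
      Finset.card_univ, ZMod.card, nsmul_eq_mul, Finset.sum_ite_eq' Finset.univ i]
    simp only [Finset.mem_univ, if_true]
    field_simp
    ring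
  have hG : ∀ j, G j - G (j - 1) =
      -((eM M (i+1) j - eM M i j) - meanM M (fun j => eM M (i+1) j - eM M i j)) / (M : ℝ) ^ 2 := by
    intro j
    rw [hmean]
    simp only [hGdef, eM, sub_zero]
    by_cases h1 : (1 : ZMod M) = 0
    · have e1 : j - 1 = j := by rw [h1, sub_zero]
      have e2 : i + 1 = i := by rw [h1, add_zero]
      rw [e1, e2]
      ring
    · have hii : i + 1 ≠ i := fun hc => h1 (by linear_combination hc - (add_zero i : i + 0 = i))
      by_cases hj : j = i
      · have hj1 : j - 1 ≠ i := by
          rw [hj]; intro hc; exact h1 (by linear_combination -hc + (sub_zero i : i - 0 = i))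
        have hji1 : j ≠ i + 1 := by rw [hj]; exact fun hc => hii hc.symm
        rw [if_pos hj, if_neg hj1, if_neg hji1, if_pos hj]
        field_simp
        ring
      · by_cases hj1 : j = i + 1
        · have hjm : j - 1 = i := by rw [hj1]; ring
          rw [if_neg hj, if_pos hjm, if_pos hj1, if_neg hj]
          field_simp
          ring
        · have hjm : j - 1 ≠ i := fun hc => hj1 (by linear_combination hc)
          rw [if_neg hj, if_neg hjm, if_neg hj1, if_neg hj]
          ring
  have hinner := inner_eq _ w' G h hG hGs
  have hsumsq : ∑ j : ZMod M, (G j) ^ 2 = (M : ℝ) * (1 / (M : ℝ) ^ 6) +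
      (((M : ℝ) - 1) ^ 2 - 1) / (M : ℝ) ^ 6 := by
    have hp : ∀ j : ZMod M, (G j) ^ 2 = 1 / (M : ℝ) ^ 6 +
        (if j = i then (((M : ℝ) - 1) ^ 2 - 1) / (M : ℝ) ^ 6 else 0) := by
      intro j
      simp only [hGdef]
      split_ifs with hj
      · rw [div_pow, show (((M : ℝ)) ^ 3) ^ 2 = (M : ℝ) ^ 6 by ring, ← add_div]
        congr 1
        ring
      · rw [add_zero, div_pow, show (((M : ℝ)) ^ 3) ^ 2 = (M : ℝ) ^ 6 by ring]
        congr 1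
        ring
    rw [Finset.sum_congr rfl (fun j _ => hp j), Finset.sum_add_distrib, Finset.sum_const,
      Finset.card_univ, ZMod.card, nsmul_eq_mul, Finset.sum_ite_eq' Finset.univ i]
    simp
  rw [hinner, hsumsq, hmean]
  have hL : (M : ℝ) * ((M : ℝ) * (1 / (M : ℝ) ^ 6) + (((M : ℝ) - 1) ^ 2 - 1) / (M : ℝ) ^ 6)
      = ((M : ℝ) - 1) / (M : ℝ) ^ 4 := by
    field_simp
    ring
  rw [hL]
  have : ((M : ℝ) - 1) / (M : ℝ) ^ 4 ≤ 2 / (M : ℝ) ^ 3 := by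
    rw [div_le_div_iff₀ (by positivity) (by positivity)]
    nlinarith [pow_nonneg hN0.le 3, pow_nonneg hN0.le 4,
      mul_le_mul_of_nonneg_left hN1 (pow_nonneg hN0.le 3)]
  nlinarith [this]

/-- `‖e_i‖²_{-1,M} ≤ C/M` and `‖e_{i+1} - e_i‖²_{-1,M} ≤ C/M³` for a universal
constant `C`, where `e_i` is the `i`-th canonical basis vector and
`‖u‖_{-1,M}² = [u]_M² + ⟨ũ, (-Δ_M)⁻¹ ũ⟩_{2,M}` is encoded via the mean-free
solutions `w`, `w'` of the corresponding discrete Poisson equations. -/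
theorem stmt10 : ∃ C : ℝ, 0 < C ∧
    ∀ (M : ℕ) [NeZero M], ∀ (i : ZMod M) (w w' : ZMod M → ℝ),
      (∑ j : ZMod M, w j = 0) →
      (∀ j, -(lapM M w j) = eM M i j - meanM M (eM M i)) →
      (∑ j : ZMod M, w' j = 0) →
      (∀ j, -(lapM M w' j) =
        (eM M (i+1) j - eM M i j) - meanM M (fun j => eM M (i+1) j - eM M i j)) →
      (meanM M (eM M i)) ^ 2 +
          innerM M (fun j => eM M i j - meanM M (eM M i)) w
        ≤ C / (M : ℝ) ∧
      (meanM M (fun j => eM M (i+1) j - eM M i j)) ^ 2 +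
          innerM M (fun j => (eM M (i+1) j - eM M i j)
            - meanM M (fun j => eM M (i+1) j - eM M i j)) w'
        ≤ C / (M : ℝ) ^ 3 := by
  refine ⟨2, by norm_num, ?_⟩
  intro M _ i w w' _ hpw _ hpw'
  exact ⟨case1 i w hpw, case2 i w' hpw'⟩
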